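/- Fix r ≥ 2 and partitions λ ⊆ μ. If the skew diagram μ/λ contains equally many cells of each color modulo r (i.e. for every i ∈ ℤ/rℤ, #{□∈μ/λ : c̄(□)=i} = #{□∈μ/λ : c̄(□)=0}), then core_r(λ) = core_r(μ). -/

import Mathlib

/-- Two cells are (edge-)adjacent. -/
def Adj (a b : ℕ × ℕ) : Prop :=
  (a.1 = b.1 ∧ (a.2 + 1 = b.2 ∨ b.2 + 1 = a.2)) ∨
  (a.2 = b.2 ∧ (a.1 + 1 = b.1 ∨ b.1 + 1 = a.1))

/-- A set of cells is connected (any two cells are joined by a path of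
edge-adjacent cells inside the set). -/
def ConnectedCells (s : Set (ℕ × ℕ)) : Prop :=
  ∀ x ∈ s, ∀ y ∈ s, Relation.ReflTransGen (fun a b => Adj a b ∧ a ∈ s ∧ b ∈ s) x y

/-- `ν` is obtained from `μ` by removing a ribbon (rim hook) of length `r`:
the skew shape `μ/ν` has `r` cells, is connected, and contains no 2×2 square. -/
def IsRibbonOf (r : ℕ) (μ ν : YoungDiagram) : Prop :=
  ν.cells ⊆ μ.cells ∧ (μ.cells \ ν.cells).card = r ∧
  ConnectedCells ((μ.cells : Set (ℕ × ℕ)) \ (ν.cells : Set (ℕ × ℕ))) ∧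
  ∀ i j : ℕ, ¬ ((i, j) ∈ μ.cells \ ν.cells ∧ (i + 1, j) ∈ μ.cells \ ν.cells ∧
      (i, j + 1) ∈ μ.cells \ ν.cells ∧ (i + 1, j + 1) ∈ μ.cells \ ν.cells)

/-- An `r`-core is a partition with no removable ribbon of length `r`. -/
def IsRCore (r : ℕ) (μ : YoungDiagram) : Prop := ∀ ν, ¬ IsRibbonOf r μ ν

/-- The beta-set of a partition. -/
def betaSet (μ : YoungDiagram) : Set ℤ :=
  {n | ∃ i : ℕ, n = (μ.rowLen i : ℤ) - (i + 1)}

/-- `ν` is the `r`-core of `μ`: it is reached from `μ` by successively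
removing `r`-ribbons, and has no `r`-ribbon left. -/
def ReachesCore (r : ℕ) (μ ν : YoungDiagram) : Prop :=
  Relation.ReflTransGen (fun a b => IsRibbonOf r a b) μ ν ∧ IsRCore r ν

/-- The total size `|quot_r(μ)|` of the `r`-quotient of `μ`, read off from the
Maya diagram: it is the number of pairs `(s, t)` with `s` in the beta-set,
`t` not in the beta-set, `t < s` and `s ≡ t (mod r)`. -/
noncomputable def quotTotal (r : ℕ) (μ : YoungDiagram) : ℕ :=
  {p : ℤ × ℤ | p.1 ∈ betaSet μ ∧ p.2 ∉ betaSet μ ∧ p.2 < p.1 ∧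
    (r : ℤ) ∣ (p.1 - p.2)}.ncard

/-- The color of a cell `(row, column)`: its content `row - column` mod `r`. -/
def cellColor (r : ℕ) (c : ℕ × ℕ) : ZMod r := (((c.1 : ℤ) - (c.2 : ℤ) : ℤ) : ZMod r)


namespace CoreProof
open YoungDiagram Finset

open YoungDiagram Finset

def sFun (μ : YoungDiagram) (i : ℕ) : ℤ := (μ.rowLen i : ℤ) - (i + 1)

lemma sFun_strictAnti (μ : YoungDiagram) : StrictAnti (sFun μ) := by
  apply strictAnti_nat_of_succ_lt
  intro n
  have := μ.rowLen_anti n (n+1) (by omega)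
  unfold sFun; push_cast; omega

lemma mem_betaSet {μ : YoungDiagram} {n : ℤ} : n ∈ betaSet μ ↔ ∃ i, sFun μ i = n := by
  unfold betaSet sFun; constructor
  · rintro ⟨i, rfl⟩; exact ⟨i, by ring⟩
  · rintro ⟨i, rfl⟩; exact ⟨i, by ring⟩

lemma sFun_ge (μ : YoungDiagram) (i : ℕ) : -(i+1 : ℤ) ≤ sFun μ i := by
  unfold sFun; have : (0:ℤ) ≤ μ.rowLen i := Int.natCast_nonneg _; omega

lemma rowLen_eq_zero_iff {μ : YoungDiagram} {i : ℕ} : μ.rowLen i = 0 ↔ μ.colLen 0 ≤ i := by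
  rw [← not_lt, ← mem_iff_lt_colLen, mem_iff_lt_rowLen]; omega

lemma sFun_eq_of_ge {μ : YoungDiagram} {i : ℕ} (h : μ.colLen 0 ≤ i) : sFun μ i = -(i+1 : ℤ) := by
  unfold sFun; rw [rowLen_eq_zero_iff.2 h]; push_cast; ring

lemma sFun_mem (μ : YoungDiagram) (i : ℕ) : sFun μ i ∈ betaSet μ := mem_betaSet.2 ⟨i, rfl⟩

lemma sFun_add_le (μ : YoungDiagram) (a : ℕ) : ∀ d : ℕ, sFun μ (a + d) ≤ sFun μ a - d := by
  intro d; induction d with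
  | zero => simp
  | succ n ih =>
    have h2 : sFun μ (a + n + 1) < sFun μ (a + n) := sFun_strictAnti μ (by omega)
    have : a + (n+1) = a + n + 1 := by omega
    rw [this]; push_cast; omega

def trunc (μ : YoungDiagram) (G : ℕ → ℤ) (h : ∀ a b : ℕ, a ≤ b → G b ≤ G a) : YoungDiagram where
  cells := μ.cells.filter (fun c => (c.2 : ℤ) < G c.1)
  isLowerSet := by
    rintro ⟨a1, a2⟩ ⟨b1, b2⟩ hab hmem
    obtain ⟨hle1, hle2⟩ : b1 ≤ a1 ∧ b2 ≤ a2 := hab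
    simp only [Finset.coe_filter, Set.mem_setOf_eq, YoungDiagram.mem_cells] at hmem ⊢
    refine ⟨μ.up_left_mem hle1 hle2 hmem.1, ?_⟩
    have := h b1 a1 hle1
    have h2 := hmem.2
    omega

lemma mem_trunc {μ : YoungDiagram} {G : ℕ → ℤ} {h} {c : ℕ × ℕ} :
    c ∈ (trunc μ G h).cells ↔ c ∈ μ.cells ∧ (c.2 : ℤ) < G c.1 := by
  simp [trunc]

lemma connected_of_profile (S : Set (ℕ × ℕ)) (i q : ℕ) (G Rr : ℕ → ℤ)
    (hmem : ∀ x y : ℕ, ((x, y) ∈ S) ↔ (i ≤ x ∧ x ≤ q ∧ G x ≤ (y : ℤ) ∧ (y : ℤ) < Rr x))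
    (hGanti : ∀ a b : ℕ, a ≤ b → G b ≤ G a)
    (hGnonneg : ∀ x, 0 ≤ G x)
    (hGR : ∀ x, i ≤ x → x ≤ q → G x < Rr x)
    (hGov : ∀ x, i ≤ x → x < q → G x < Rr (x+1)) :
    ConnectedCells S := by
  set Pr : ℕ × ℕ → ℕ × ℕ → Prop := fun a b => Adj a b ∧ a ∈ S ∧ b ∈ S with hPr
  set ℓ : ℕ → ℕ := fun x => (G x).toNat with hℓ
  have hℓcast : ∀ x, (ℓ x : ℤ) = G x := fun x => Int.toNat_of_nonneg (hGnonneg x)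
  have stepH : ∀ x y d, ((x, y + d) ∈ S) → ((x, y) ∈ S) →
      Relation.ReflTransGen Pr (x, y + d) (x, y) := by
    intro x y d
    induction d with
    | zero => intro _ _; exact Relation.ReflTransGen.refl
    | succ n ih =>
      intro h1 h2
      rw [hmem] at h1 h2
      have hmidm : (x, y + n) ∈ S := by
        rw [hmem]
        refine ⟨h1.1, h1.2.1, ?_, ?_⟩
        · have := h2.2.2.1; push_cast; omega
        · have := h1.2.2.2; push_cast at this ⊢; omega
      have hadj : Adj (x, y + (n+1)) (x, y + n) := by
        left; exact ⟨rfl, Or.inr rfl⟩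
      have h1' : (x, y + (n+1)) ∈ S := by rw [hmem]; exact h1
      have h2' : (x, y) ∈ S := by rw [hmem]; exact h2
      exact Relation.ReflTransGen.head ⟨hadj, h1', hmidm⟩ (ih hmidm h2')
  have stepH' : ∀ x y y', ((x, y) ∈ S) → ((x, y') ∈ S) → y' ≤ y →
      Relation.ReflTransGen Pr (x, y) (x, y') := by
    intro x y y' h1 h2 hle
    have : y = y' + (y - y') := by omega
    rw [this] at h1 ⊢
    exact stepH x y' (y - y') h1 h2
  have hrowmem : ∀ x, i ≤ x → x ≤ q → (x, ℓ x) ∈ S := by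
    intro x h1 h2
    rw [hmem, hℓcast]
    exact ⟨h1, h2, le_refl _, hGR x h1 h2⟩
  have stepV : ∀ x, i ≤ x → x < q →
      Relation.ReflTransGen Pr (x, ℓ x) (x+1, ℓ (x+1)) := by
    intro x h1 h2
    have hm1 : (x, ℓ x) ∈ S := hrowmem x h1 (by omega)
    have hm2 : (x+1, ℓ x) ∈ S := by
      rw [hmem, hℓcast]
      exact ⟨by omega, by omega, hGanti x (x+1) (by omega), hGov x h1 h2⟩
    have hm3 : (x+1, ℓ (x+1)) ∈ S := hrowmem (x+1) (by omega) (by omega)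
    have hadj : Adj (x, ℓ x) (x+1, ℓ x) := by
      right; exact ⟨rfl, Or.inl rfl⟩
    refine Relation.ReflTransGen.head ⟨hadj, hm1, hm2⟩ ?_
    refine stepH' (x+1) (ℓ x) (ℓ (x+1)) hm2 hm3 ?_
    have := hGanti x (x+1) (by omega)
    have c1 := hℓcast x; have c2 := hℓcast (x+1)
    omega
  have step3 : ∀ d x, i ≤ x → x + d = q →
      Relation.ReflTransGen Pr (x, ℓ x) (q, ℓ q) := by
    intro d
    induction d with
    | zero => intro x h1 h2; rw [show x = q from by omega]
    | succ n ih =>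
      intro x h1 h2
      exact (stepV x h1 (by omega)).trans (ih (x+1) (by omega) (by omega))
  have hto : ∀ c ∈ S, Relation.ReflTransGen Pr c (q, ℓ q) := by
    rintro ⟨x, y⟩ hc
    have hb := (hmem x y).1 hc
    have h1 : (x, ℓ x) ∈ S := hrowmem x hb.1 hb.2.1
    refine (stepH' x y (ℓ x) hc h1 ?_).trans (step3 (q - x) x hb.1 (by omega))
    have := hℓcast x
    have := hb.2.2.1
    omega
  have hsymm : Symmetric Pr := by
    rintro a b ⟨h1, h2, h3⟩
    refine ⟨?_, h3, h2⟩
    unfold Adj at h1 ⊢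
    tauto
  intro x hx y hy
  exact (hto x hx).trans ((@Relation.ReflTransGen.symmetric _ Pr ⟨fun a b h => hsymm h⟩).symm _ _ (hto y hy))

/-- The ribbon construction: a gap in the beta set yields a removable ribbon. -/
lemma exists_ribbon (r : ℕ) (hr : 1 ≤ r) (μ : YoungDiagram) (i : ℕ)
    (hgap : sFun μ i - r ∉ betaSet μ) : ∃ ν, IsRibbonOf r μ ν := by
  set s : ℤ := sFun μ i with hs
  -- i' : the first index where sFun goes below s - r
  have hex : ∃ j, sFun μ j < s - r := by
    refine ⟨μ.colLen 0 + (r - s).toNat, ?_⟩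
    rw [sFun_eq_of_ge (by omega)]
    have := Int.self_le_toNat (r - s)
    push_cast
    omega
  set i' := Nat.find hex with hi'def
  have hs2 : sFun μ i' < s - r := Nat.find_spec hex
  have hs1 : ∀ j, j < i' → s - r < sFun μ j := by
    intro j hj
    have h1 := Nat.find_min hex hj
    rcases lt_or_eq_of_le (not_lt.1 h1) with h | h
    · exact h
    · exact absurd (mem_betaSet.2 ⟨j, h.symm⟩) hgap
  have hii' : i < i' := by
    by_contra h
    have : s ≤ sFun μ i' := (sFun_strictAnti μ).antitone (not_lt.1 h)
    omega
  have hlow : -(i' : ℤ) ≤ s - r := by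
    have := sFun_ge μ i'
    omega
  obtain ⟨q, hq⟩ : ∃ q, i' = q + 1 := ⟨i' - 1, by omega⟩
  have hiq : i ≤ q := by omega
  have hsq : sFun μ (q+1) < s - r := by rw [← hq]; exact hs2
  have hsq1 : ∀ j, j ≤ q → s - r < sFun μ j := fun j hj => hs1 j (by omega)
  have hlow' : -(q : ℤ) - 1 ≤ s - r := by rw [hq] at hlow; push_cast at hlow ⊢; omega
  clear hs1 hs2 hlow hgap hi'def
  -- row length profile of the new diagram
  set R : ℕ → ℤ := fun x => (μ.rowLen x : ℤ) with hRdef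
  have hRs : ∀ x, R x = sFun μ x + x + 1 := by
    intro x; simp only [hRdef, sFun]; ring
  have hRanti : ∀ a b : ℕ, a ≤ b → R b ≤ R a := fun a b h => by
    simp only [hRdef]; exact_mod_cast μ.rowLen_anti a b h
  set G : ℕ → ℤ := fun x =>
    if x < i then R x else if x + 1 ≤ q then R (x+1) - 1 else if x = q then s - r + q + 1
    else R x with hGdef
  have hGlt : ∀ x, x < i → G x = R x := by intro x hx; simp only [hGdef]; rw [if_pos hx]
  have hGmid : ∀ x, i ≤ x → x + 1 ≤ q → G x = R (x+1) - 1 := by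
    intro x h1 h2; simp only [hGdef]; rw [if_neg (by omega), if_pos h2]
  have hGq : G q = s - r + q + 1 := by
    simp only [hGdef]; rw [if_neg (by omega), if_neg (by omega)]; simp
  have hGgt : ∀ x, q < x → G x = R x := by
    intro x hx; simp only [hGdef]; rw [if_neg (by omega), if_neg (by omega), if_neg (by omega)]
  have hGnonneg : ∀ x, 0 ≤ G x := by
    intro x
    rcases lt_or_ge x i with h | h
    · rw [hGlt x h, hRs]; have := sFun_ge μ x; omega
    rcases le_or_gt (x+1) q with h2 | h2
    · rw [hGmid x h h2, hRs]
      have h4 := sFun_add_le μ (x+1) (q - (x+1))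
      rw [show x + 1 + (q - (x+1)) = q from by omega] at h4
      have h5 := hsq1 q (le_refl q)
      push_cast
      omega
    rcases eq_or_lt_of_le (show q ≤ x by omega) with h3 | h3
    · subst h3; rw [hGq]; omega
    · rw [hGgt x h3, hRs]; have := sFun_ge μ x; omega
  have hGleR : ∀ x, G x ≤ R x := by
    intro x
    rcases lt_or_ge x i with h | h
    · rw [hGlt x h]
    rcases le_or_gt (x+1) q with h2 | h2
    · rw [hGmid x h h2]; have := hRanti x (x+1) (by omega); omega
    rcases eq_or_lt_of_le (show q ≤ x by omega) with h3 | h3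
    · subst h3
      rw [hGq, hRs]
      have := hsq1 q (le_refl q)
      omega
    · rw [hGgt x h3]
  have hGanti : ∀ a b : ℕ, a ≤ b → G b ≤ G a := by
    have step : ∀ x, G (x+1) ≤ G x := by
      intro x
      rcases lt_or_ge (x+1) i with h | h
      · rw [hGlt x (by omega), hGlt (x+1) h]; exact hRanti x (x+1) (by omega)
      rcases le_or_gt (x+2) q with h2 | h2
      · rw [hGmid (x+1) h (by omega)]
        simp only [show x+1+1 = x+2 from rfl]
        rcases lt_or_ge x i with h3 | h3
        · rw [hGlt x h3]; have := hRanti x (x+2) (by omega); omega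
        · rw [hGmid x h3 (by omega)]; have := hRanti (x+1) (x+2) (by omega); omega
      rcases eq_or_lt_of_le (show q ≤ x + 1 by omega) with h3 | h3
      · -- q = x + 1
        subst h3
        rw [hGq]
        have hx1q : s - r < sFun μ (x+1) := hsq1 (x+1) (le_refl _)
        have h6 : s - r < sFun μ x := hsq1 x (by omega)
        rcases lt_or_ge x i with h4 | h4
        · rw [hGlt x h4, hRs]
          push_cast; omega
        · rw [hGmid x h4 (le_refl _), hRs]
          push_cast; omega
      -- q < x + 1, i.e. q ≤ x
      rcases eq_or_lt_of_le (show q ≤ x by omega) with h4 | h4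
      · subst h4
        rw [hGq, hGgt (q+1) (by omega), hRs]
        push_cast; omega
      · rw [hGgt x h4, hGgt (x+1) (by omega)]; exact hRanti x (x+1) (by omega)
    intro a b hab
    induction b with
    | zero => have : a = 0 := by omega
              rw [this]
    | succ n ihn =>
      rcases eq_or_lt_of_le hab with h | h
      · rw [h]
      · exact le_trans (step n) (ihn (by omega))
  -- the smaller diagram
  set ν : YoungDiagram := trunc μ G hGanti with hν
  have hmemμ : ∀ x y : ℕ, ((x, y) ∈ μ.cells) ↔ (y : ℤ) < R x := by
    intro x y
    rw [YoungDiagram.mem_cells, YoungDiagram.mem_iff_lt_rowLen]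
    simp only [hRdef]
    exact ⟨fun h => by exact_mod_cast h, fun h => by exact_mod_cast h⟩
  have hskew : ∀ x y : ℕ, ((x, y) ∈ μ.cells \ ν.cells) ↔
      (i ≤ x ∧ x ≤ q ∧ G x ≤ (y : ℤ) ∧ (y : ℤ) < R x) := by
    intro x y
    rw [Finset.mem_sdiff, hν]
    constructor
    · rintro ⟨h1, h2⟩
      rw [mem_trunc] at h2
      push_neg at h2
      have hy := (hmemμ x y).1 h1
      have hGy : G x ≤ (y : ℤ) := h2 h1
      refine ⟨?_, ?_, hGy, hy⟩
      · by_contra hc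
        rw [hGlt x (by omega)] at hGy; omega
      · by_contra hc
        rw [hGgt x (by omega)] at hGy; omega
    · rintro ⟨h1, h2, h3, h4⟩
      refine ⟨(hmemμ x y).2 h4, ?_⟩
      rw [mem_trunc]
      push_neg
      intro _
      exact h3
  -- the skew cells as an explicit union of row segments
  have hrows : μ.cells \ ν.cells = (Finset.Ico i (q+1)).biUnion
      (fun x => (Finset.Ico ((G x).toNat) (μ.rowLen x)).map
        ⟨fun y => (x, y), fun a b hab => by simpa using hab⟩) := by
    ext ⟨x, y⟩
    rw [hskew]
    simp only [Finset.mem_biUnion, Finset.mem_Ico, Finset.mem_map, Function.Embedding.coeFn_mk,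
      DFunLike.coe, Prod.mk.injEq]
    constructor
    · rintro ⟨h1, h2, h3, h4⟩
      refine ⟨x, ⟨h1, by omega⟩, y, ⟨?_, ?_⟩, rfl, rfl⟩
      · exact Int.toNat_le.2 h3
      · have : (y:ℤ) < (μ.rowLen x : ℤ) := h4
        exact_mod_cast this
    · rintro ⟨x', ⟨hx1, hx2⟩, y', ⟨hy1, hy2⟩, rfl, rfl⟩
      refine ⟨hx1, by omega, ?_, ?_⟩
      · rw [← Int.toNat_le]  -- wrong direction? we need G x' ≤ y' from toNat ≤ y'
        exact hy1
      · simp only [hRdef]; exact_mod_cast hy2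
  refine ⟨ν, ?_, ?_, ?_, ?_⟩
  · -- ν ⊆ μ
    intro c hc
    rw [hν, mem_trunc] at hc
    exact hc.1
  · -- cardinality
    have hdisj : ∀ a ∈ Finset.Ico i (q+1), ∀ b ∈ Finset.Ico i (q+1), a ≠ b →
        Disjoint ((Finset.Ico ((G a).toNat) (μ.rowLen a)).map
            ⟨fun y => (a, y), fun u v huv => by simpa using huv⟩)
          ((Finset.Ico ((G b).toNat) (μ.rowLen b)).map
            ⟨fun y => (b, y), fun u v huv => by simpa using huv⟩) := by
      intro a _ b _ hab
      rw [Finset.disjoint_left]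
      rintro ⟨x, y⟩ hxa hxb
      simp only [Finset.mem_map, Function.Embedding.coeFn_mk, DFunLike.coe, Prod.mk.injEq] at hxa hxb
      obtain ⟨_, _, rfl, _⟩ := hxa
      obtain ⟨_, _, h, _⟩ := hxb
      exact hab h.symm
    rw [hrows, Finset.card_biUnion hdisj]
    simp only [Finset.card_map, Nat.card_Ico]
    have key : (Finset.Ico i (q+1)).sum (fun x => ((μ.rowLen x - (G x).toNat : ℕ) : ℤ)) = r := by
      have hterm : ∀ x ∈ Finset.Ico i (q+1), ((μ.rowLen x - (G x).toNat : ℕ) : ℤ) = R x - G x := by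
        intro x hx
        have h0 := hGnonneg x
        have h1 : G x ≤ (μ.rowLen x : ℤ) := by
          have := hGleR x; simpa [hRdef] using this
        have h2 : (G x).toNat ≤ μ.rowLen x := by omega
        push_cast [h2]
        rw [Int.toNat_of_nonneg h0]
      rw [Finset.sum_congr rfl hterm, Finset.sum_Ico_succ_top (by omega : i ≤ q)]
      have hmid2 : ∀ x ∈ Finset.Ico i q, R x - G x = sFun μ x - sFun μ (x+1) := by
        intro x hx
        simp only [Finset.mem_Ico] at hx
        rw [hGmid x hx.1 (by omega), hRs, hRs]
        push_cast; ring
      rw [Finset.sum_congr rfl hmid2, hGq, hRs, Finset.sum_Ico_eq_sum_range]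
      have hre : ∀ k ∈ Finset.range (q - i),
          sFun μ (i + k) - sFun μ (i + k + 1)
            = (fun m => sFun μ (i + m)) k - (fun m => sFun μ (i + m)) (k+1) := by
        intro k _
        simp only
        rw [show i + (k+1) = i + k + 1 from by omega]
      rw [Finset.sum_congr rfl hre, Finset.sum_range_sub' (fun m => sFun μ (i + m)) (q - i)]
      rw [show i + 0 = i from by omega, show i + (q - i) = q from by omega]
      omega
    exact_mod_cast key
  · -- connectivity
    refine connected_of_profile _ i q G R ?hmm hGanti hGnonneg ?hGR ?hGov
    case hGR =>
      -- rows nonempty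
      intro x h1 h2
      rcases lt_or_ge x q with h3 | h3
      · rw [hGmid x h1 (by omega)]
        have := hRanti x (x+1) (by omega)
        omega
      · have : x = q := by omega
        subst this
        rw [hGq, hRs]
        have := hsq1 x (le_refl x)
        omega
    case hGov =>
      intro x h1 h2
      rw [hGmid x h1 (by omega)]
      omega
    case hmm =>
      intro x y
      rw [show ((x, y) ∈ (↑μ.cells \ ↑ν.cells : Set (ℕ × ℕ))) ↔ ((x, y) ∈ μ.cells \ ν.cells) from by
        rw [Finset.mem_sdiff, Set.mem_diff]; simp]
      exact hskew x y
  · -- no 2x2 square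
    intro x y hcon
    obtain ⟨c1, c2, c3, c4⟩ := hcon
    rw [hskew] at c1 c2 c4
    obtain ⟨h1, h2, h3, h4⟩ := c1
    obtain ⟨h1', h2', h3', h4'⟩ := c2
    obtain ⟨_, _, _, h4''⟩ := c4
    have hx : G x = R (x+1) - 1 := hGmid x h1 (by omega)
    push_cast at h4''
    omega

open YoungDiagram Finset

def NA (r : ℕ) (a : ZMod r) (μ : YoungDiagram) : ℕ :=
  (μ.cells.filter (fun c => cellColor r c = a)).card

def content (c : ℕ × ℕ) : ℤ := (c.1 : ℤ) - c.2

lemma cellColor_eq_content (r : ℕ) (c : ℕ × ℕ) :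
    cellColor r c = ((content c : ℤ) : ZMod r) := rfl

lemma adj_content {p c : ℕ × ℕ} (h : Adj p c) :
    content c = content p + 1 ∨ content c = content p - 1 := by
  obtain ⟨p1, p2⟩ := p
  obtain ⟨c1, c2⟩ := c
  unfold content
  rcases h with ⟨h1, h2 | h2⟩ | ⟨h1, h2 | h2⟩ <;> simp only at h1 h2 ⊢ <;> omega

lemma ribbon_NA {r : ℕ} (hr : 1 ≤ r) {μ ν : YoungDiagram} (h : IsRibbonOf r μ ν) (a : ZMod r) :
    NA r a μ = NA r a ν + 1 := by
  obtain ⟨hsub, hcard, hconn, h2x2⟩ := h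
  set S := μ.cells \ ν.cells with hSdef
  have hset : ∀ p : ℕ × ℕ, p ∈ ((μ.cells : Set (ℕ × ℕ)) \ (ν.cells : Set (ℕ × ℕ))) ↔ p ∈ S := by
    intro p
    rw [Set.mem_diff, hSdef, Finset.mem_sdiff]
    simp
  -- injectivity of the content map on the ribbon
  have haux : ∀ i j i' j' : ℕ, (i, j) ∈ S → (i', j') ∈ S → i < i' →
      content (i, j) = content (i', j') → False := by
    intro i j i' j' h1 h2 hlt hcnt
    unfold content at hcnt
    simp only at hcnt
    rw [hSdef, Finset.mem_sdiff] at h1 h2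
    have hμ : (i', j') ∈ μ := (YoungDiagram.mem_cells _).1 h2.1
    have hν1 : (i, j) ∉ ν.cells := h1.2
    have m2 : (i+1, j) ∈ μ := μ.up_left_mem (by omega) (by omega) hμ
    have m3 : (i, j+1) ∈ μ := μ.up_left_mem (by omega) (by omega) hμ
    have m4 : (i+1, j+1) ∈ μ := μ.up_left_mem (by omega) (by omega) hμ
    have n2 : (i+1, j) ∉ ν.cells := fun hc =>
      hν1 ((YoungDiagram.mem_cells _).2 (ν.up_left_mem (by omega) (by omega) ((YoungDiagram.mem_cells _).1 hc)))
    have n3 : (i, j+1) ∉ ν.cells := fun hc =>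
      hν1 ((YoungDiagram.mem_cells _).2 (ν.up_left_mem (by omega) (by omega) ((YoungDiagram.mem_cells _).1 hc)))
    have n4 : (i+1, j+1) ∉ ν.cells := fun hc =>
      hν1 ((YoungDiagram.mem_cells _).2 (ν.up_left_mem (by omega) (by omega) ((YoungDiagram.mem_cells _).1 hc)))
    exact h2x2 i j ⟨Finset.mem_sdiff.2 ⟨h1.1, hν1⟩,
      Finset.mem_sdiff.2 ⟨(YoungDiagram.mem_cells _).2 m2, n2⟩,
      Finset.mem_sdiff.2 ⟨(YoungDiagram.mem_cells _).2 m3, n3⟩,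
      Finset.mem_sdiff.2 ⟨(YoungDiagram.mem_cells _).2 m4, n4⟩⟩
  have hinj : Set.InjOn content ↑S := by
    rintro ⟨i, j⟩ h1 ⟨i', j'⟩ h2 hc
    simp only [Finset.mem_coe] at h1 h2
    rcases lt_trichotomy i i' with hlt | heq | hgt
    · exact (haux i j i' j' h1 h2 hlt hc).elim
    · subst heq
      unfold content at hc; simp only at hc
      have : j = j' := by omega
      rw [this]
    · exact (haux i' j' i j h2 h1 hgt hc.symm).elim
  set T := S.image content with hT
  have hTcard : T.card = r := by
    rw [hT, Finset.card_image_of_injOn hinj, hcard]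
  have hSne : S.Nonempty := by
    rw [← Finset.card_pos, hcard]; omega
  have hTne : T.Nonempty := hSne.image content
  set m := T.min' hTne with hm
  set M := T.max' hTne with hM
  -- interval property
  have hQ : ∀ cB ∈ S, ∀ cA, Relation.ReflTransGen
      (fun a b => Adj a b ∧ a ∈ ((μ.cells : Set (ℕ × ℕ)) \ (ν.cells : Set (ℕ × ℕ)))
        ∧ b ∈ ((μ.cells : Set (ℕ × ℕ)) \ (ν.cells : Set (ℕ × ℕ)))) cA cB →
      ∀ z : ℤ, ((content cA ≤ z ∧ z ≤ content cB) ∨ (content cB ≤ z ∧ z ≤ content cA)) →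
      ∃ d ∈ S, content d = z := by
    intro cB hB cA hpath
    induction hpath using Relation.ReflTransGen.head_induction_on with
    | refl =>
      intro z hz
      exact ⟨cB, hB, by omega⟩
    | head hab _ ih =>
      rename_i a b _
      intro z hz
      rcases eq_or_ne z (content a) with rfl | hne
      · exact ⟨a, (hset a).1 hab.2.1, rfl⟩
      · rcases adj_content hab.1 with hd | hd <;> exact ih z (by omega)
  have hIcc : T = Finset.Icc m M := by
    apply Finset.Subset.antisymm
    · intro z hz
      rw [Finset.mem_Icc]
      exact ⟨Finset.min'_le T z hz, Finset.le_max' T z hz⟩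
    · intro z hz
      rw [Finset.mem_Icc] at hz
      obtain ⟨cm, hcm, hcmv⟩ := Finset.mem_image.1 (T.min'_mem hTne)
      obtain ⟨cM, hcM, hcMv⟩ := Finset.mem_image.1 (T.max'_mem hTne)
      have hpath := hconn cm ((hset cm).2 hcm) cM ((hset cM).2 hcM)
      obtain ⟨d, hd, hdv⟩ := hQ cM hcM cm hpath z (by omega)
      rw [hT, Finset.mem_image]
      exact ⟨d, hd, hdv⟩
  have hMm : M = m + r - 1 := by
    have := hTcard
    rw [hIcc, Int.card_Icc] at this
    have hmM : m ≤ M := Finset.min'_le T M (T.max'_mem hTne)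
    omega
  -- each color appears exactly once on the ribbon
  haveI : NeZero r := ⟨by omega⟩
  have hone : (S.filter (fun c => cellColor r c = a)).card = 1 := by
    have himg : (S.filter (fun c => cellColor r c = a)).image content
        = T.filter (fun z => ((z : ℤ) : ZMod r) = a) := by
      ext z
      simp only [Finset.mem_image, Finset.mem_filter, hT]
      constructor
      · rintro ⟨d, ⟨hd1, hd2⟩, rfl⟩
        exact ⟨⟨d, hd1, rfl⟩, by rw [← cellColor_eq_content]; exact hd2⟩
      · rintro ⟨⟨d, hd1, rfl⟩, hz⟩
        exact ⟨d, ⟨hd1, by rw [cellColor_eq_content]; exact hz⟩, rfl⟩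
    have hcinj : Set.InjOn content ↑(S.filter (fun c => cellColor r c = a)) :=
      hinj.mono (by intro x hx; simp only [Finset.coe_filter, Set.mem_setOf_eq] at hx
                    exact hx.1)
    rw [← Finset.card_image_of_injOn hcinj, himg]
    -- exactly one residue in an interval of length r
    set v := ((a - ((m : ℤ) : ZMod r)).val : ℤ) with hv
    have hv0 : 0 ≤ v := Int.natCast_nonneg _
    have hvr : v < r := by
      rw [hv]; exact_mod_cast ZMod.val_lt _
    have hvc : ((v : ℤ) : ZMod r) = a - ((m : ℤ) : ZMod r) := by
      rw [hv]
      push_cast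
      exact ZMod.natCast_rightInverse _
    rw [Finset.card_eq_one]
    refine ⟨m + v, ?_⟩
    ext z
    simp only [Finset.mem_filter, Finset.mem_singleton, hIcc, Finset.mem_Icc]
    constructor
    · rintro ⟨⟨hz1, hz2⟩, hz3⟩
      have hdvd : (r : ℤ) ∣ (z - (m + v)) := by
        have : ((z - (m + v) : ℤ) : ZMod r) = 0 := by
          push_cast
          rw [hvc]
          rw [hz3]  -- ?
          ring
        rwa [ZMod.intCast_zmod_eq_zero_iff_dvd] at this
      by_contra hne
      have habs : (r : ℤ) ≤ |z - (m + v)| := Int.le_of_dvd (abs_pos.2 (by omega)) ((dvd_abs _ _).2 hdvd)  -- check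
      rw [le_abs] at habs
      omega
    · rintro rfl
      refine ⟨⟨by omega, by omega⟩, ?_⟩
      push_cast
      rw [hvc]
      ring
  -- final count
  have hsplit : μ.cells = ν.cells ∪ S := by
    rw [hSdef, Finset.union_sdiff_of_subset hsub]
  rw [NA, NA, hsplit, Finset.filter_union,
    Finset.card_union_of_disjoint (Finset.disjoint_filter_filter Finset.disjoint_sdiff), hone]

open YoungDiagram Finset


lemma reaches_NA {r : ℕ} (hr : 1 ≤ r) {μ ν : YoungDiagram}
    (h : Relation.ReflTransGen (fun a b => IsRibbonOf r a b) μ ν) :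
    ∃ k, ∀ a, NA r a μ = NA r a ν + k := by
  induction h with
  | refl => exact ⟨0, fun a => rfl⟩
  | tail _ hbc ih =>
    obtain ⟨k, hk⟩ := ih
    refine ⟨k + 1, fun a => ?_⟩
    have := ribbon_NA hr hbc a
    have := hk a
    omega

lemma rcore_closed {r : ℕ} (hr : 1 ≤ r) {μ : YoungDiagram} (hc : IsRCore r μ) :
    ∀ s ∈ betaSet μ, s - r ∈ betaSet μ := by
  intro s hs
  by_contra hgap
  obtain ⟨i, rfl⟩ := mem_betaSet.1 hs
  obtain ⟨ν, hν⟩ := exists_ribbon r hr μ i hgap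
  exact hc ν hν

lemma closed_iter {r : ℕ} {B : Set ℤ} (hcl : ∀ s ∈ B, s - r ∈ B) :
    ∀ t ∈ B, ∀ k : ℕ, t - k * r ∈ B := by
  intro t ht k
  induction k with
  | zero => simpa using ht
  | succ n ih =>
    have := hcl _ ih
    have he : t - (n + 1 : ℕ) * r = (t - n * r) - r := by push_cast; ring
    rwa [he]

lemma betaSet_mem_low {μ : YoungDiagram} {t : ℤ} (ht : t ≤ -(μ.colLen 0 : ℤ) - 1) :
    t ∈ betaSet μ := by
  have h0 : 0 ≤ -t - 1 := by
    have : (0:ℤ) ≤ μ.colLen 0 := Int.natCast_nonneg _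
    omega
  set i : ℕ := (-t - 1).toNat with hi
  have hic : (i : ℤ) = -t - 1 := Int.toNat_of_nonneg h0
  have hge : μ.colLen 0 ≤ i := by omega
  rw [mem_betaSet]
  exact ⟨i, by rw [sFun_eq_of_ge hge]; omega⟩

lemma betaSet_le_max {μ : YoungDiagram} {t : ℤ} (ht : t ∈ betaSet μ) : t ≤ sFun μ 0 := by
  obtain ⟨i, rfl⟩ := mem_betaSet.1 ht
  have h1 := sFun_add_le μ 0 i
  rw [Nat.zero_add] at h1
  have : (0:ℤ) ≤ i := Int.natCast_nonneg _
  omega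

open YoungDiagram Finset

attribute [local instance] Classical.propDecidable

def Pset (μ : YoungDiagram) (c : ℤ) : Set ℕ := {x : ℕ | c ≤ (x : ℤ) ∧ -c ≤ sFun μ x}

lemma Pset_finite (μ : YoungDiagram) (c : ℤ) : (Pset μ c).Finite := by
  apply Set.Finite.subset (Set.finite_Iic (sFun μ 0 + c).toNat)
  rintro x ⟨h1, h2⟩
  have h3 := sFun_add_le μ 0 x
  rw [Nat.zero_add] at h3
  simp only [Set.mem_Iic]
  omega

lemma Esin_finite (μ : YoungDiagram) (t : ℤ) : {x : ℕ | sFun μ x = t}.Finite := by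
  apply Set.Subsingleton.finite
  intro x hx y hy
  exact (sFun_strictAnti μ).injective (hx.trans hy.symm)

noncomputable def ndiag (μ : YoungDiagram) (c : ℤ) : ℕ := (Pset μ c).ncard

lemma Esin_ncard (μ : YoungDiagram) (t : ℤ) :
    {x : ℕ | sFun μ x = t}.ncard = if t ∈ betaSet μ then 1 else 0 := by
  split_ifs with h
  · obtain ⟨x0, hx0⟩ := mem_betaSet.1 h
    have he : {x : ℕ | sFun μ x = t} = {x0} := by
      ext y; simp only [Set.mem_setOf_eq, Set.mem_singleton_iff]
      constructor
      · intro hy; exact (sFun_strictAnti μ).injective (hy.trans hx0.symm)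
      · rintro rfl; exact hx0
    rw [he, Set.ncard_singleton]
  · have he : {x : ℕ | sFun μ x = t} = ∅ := by
      ext y; simp only [Set.mem_setOf_eq, Set.mem_empty_iff_false, iff_false]
      intro hy; exact h (mem_betaSet.2 ⟨y, hy⟩)
    rw [he, Set.ncard_empty]

lemma ndiag_eq_card (μ : YoungDiagram) (c : ℤ) :
    (μ.cells.filter (fun p => content p = c)).card = ndiag μ c := by
  have him : Pset μ c = Prod.fst '' ((μ.cells.filter (fun p => content p = c) : Finset (ℕ × ℕ)) : Set (ℕ × ℕ)) := by
    ext x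
    simp only [Set.mem_image, Finset.mem_coe, Finset.mem_filter, Pset, Set.mem_setOf_eq]
    constructor
    · rintro ⟨h1, h2⟩
      refine ⟨(x, ((x:ℤ) - c).toNat), ⟨?_, ?_⟩, rfl⟩
      · rw [YoungDiagram.mem_cells, YoungDiagram.mem_iff_lt_rowLen]
        unfold sFun at h2
        omega
      · unfold content; simp only; omega
    · rintro ⟨⟨p1, p2⟩, ⟨hp1, hp2⟩, rfl⟩
      unfold content at hp2; simp only at hp2 ⊢
      rw [YoungDiagram.mem_cells, YoungDiagram.mem_iff_lt_rowLen] at hp1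
      unfold sFun
      constructor
      · omega
      · omega
  rw [ndiag, him, Set.ncard_image_of_injOn ?inj, Set.ncard_coe_finset]
  case inj =>
    rintro ⟨p1, p2⟩ hp ⟨q1, q2⟩ hq h
    simp only [Finset.mem_coe, Finset.mem_filter] at hp hq
    simp only at h
    subst h
    unfold content at hp hq
    simp only at hp hq
    have : p2 = q2 := by omega
    rw [this]

lemma ndiag_rec (μ : YoungDiagram) (c : ℤ) :
    (ndiag μ c : ℤ) - ndiag μ (c+1)
      = (if 0 ≤ c then 1 else 0) - (if (-c-1) ∈ betaSet μ then 1 else 0) := by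
  have hE := Esin_ncard μ (-c-1)
  rcases lt_or_ge c 0 with hc | hc
  · have hun : Pset μ (c+1) = Pset μ c ∪ {x : ℕ | sFun μ x = -c-1} := by
      ext x
      simp only [Pset, Set.mem_setOf_eq, Set.mem_union]
      omega
    have hdisj : Disjoint (Pset μ c) {x : ℕ | sFun μ x = -c-1} := by
      rw [Set.disjoint_left]
      rintro x ⟨h1, h2⟩ h3
      simp only [Set.mem_setOf_eq] at h3
      omega
    unfold ndiag
    rw [hun, Set.ncard_union_eq hdisj (Pset_finite μ c) (Esin_finite μ (-c-1)), hE]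
    split_ifs <;> push_cast <;> omega
  · obtain ⟨m, rfl⟩ := Int.eq_ofNat_of_zero_le hc
    have hgem := sFun_ge μ m
    rcases le_or_gt (-(m:ℤ)) (sFun μ m) with h0 | h0
    · -- row m nonempty
      have hun : Pset μ ((m:ℤ)+1) = (Pset μ m \ {m}) ∪ {x : ℕ | sFun μ x = -(m:ℤ)-1} := by
        ext x
        have hx := sFun_ge μ x
        simp only [Pset, Set.mem_setOf_eq, Set.mem_union, Set.mem_diff, Set.mem_singleton_iff]
        constructor
        · rintro ⟨h1, h2⟩
          rcases le_or_gt (-(m:ℤ)) (sFun μ x) with h3 | h3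
          · left; refine ⟨⟨by omega, h3⟩, by omega⟩
          · right; omega
        · rintro (⟨⟨h1, h2⟩, h3⟩ | h1)
          · constructor
            · omega
            · omega
          · constructor
            · -- x ≥ m + 1 : sFun x = -m-1 < -m ≤ sFun m so x ≠ m, plus -m-1 ≥ -x-1
              have hxm : x ≠ m := by intro hh; rw [hh] at h1; omega
              omega
            · omega
      have hdisj : Disjoint (Pset μ m \ {m}) {x : ℕ | sFun μ x = -(m:ℤ)-1} := by
        rw [Set.disjoint_left]
        rintro x ⟨⟨h1, h2⟩, _⟩ h3
        simp only [Set.mem_setOf_eq] at h3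
        omega
      have hcun := Set.ncard_union_eq hdisj ((Pset_finite μ m).diff (t := _)) (Esin_finite μ (-(m:ℤ)-1))
      have hmem : m ∈ Pset μ m := by simp only [Pset, Set.mem_setOf_eq]; omega
      have hdiff := Set.ncard_diff_singleton_of_mem hmem
      have hpos : 0 < (Pset μ m).ncard := (Set.ncard_pos (Pset_finite μ m)).2 ⟨m, hmem⟩
      unfold ndiag
      rw [hun, hcun, hdiff, hE]
      split_ifs <;> push_cast <;> omega
    · -- row m empty : sFun μ m = -m-1
      have hsm : sFun μ m = -(m:ℤ)-1 := by omega
      have hmemB : (-(m:ℤ)-1) ∈ betaSet μ := mem_betaSet.2 ⟨m, hsm⟩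
      have hun : Pset μ ((m:ℤ)+1) = Pset μ m := by
        ext x
        have hx := sFun_ge μ x
        simp only [Pset, Set.mem_setOf_eq]
        constructor
        · rintro ⟨h1, h2⟩
          refine ⟨by omega, ?_⟩
          rcases eq_or_lt_of_le h2 with h3 | h3
          · have hxx : sFun μ x = sFun μ m := by omega
            have := (sFun_strictAnti μ).injective hxx
            omega
          · omega
        · rintro ⟨h1, h2⟩
          have hxm : x ≠ m := by intro hh; rw [hh] at h2; omega
          exact ⟨by omega, by omega⟩
      unfold ndiag
      rw [hun, if_pos hmemB, if_pos (by omega : (0:ℤ) ≤ (m:ℤ))]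
      ring
open YoungDiagram Finset

attribute [local instance] Classical.propDecidable

lemma image_gt (μ : YoungDiagram) (n : ℕ) :
    {y | y ∈ betaSet μ ∧ sFun μ n < y} = sFun μ '' Set.Iio n := by
  ext y; constructor
  · rintro ⟨hy, hgt⟩
    obtain ⟨k, rfl⟩ := mem_betaSet.1 hy
    exact ⟨k, (sFun_strictAnti μ).lt_iff_gt.1 hgt, rfl⟩
  · rintro ⟨k, hk, rfl⟩
    exact ⟨sFun_mem μ k, sFun_strictAnti μ hk⟩

lemma sFun_eq_of_betaSet_eq {μ ν : YoungDiagram} (h : betaSet μ = betaSet ν) :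
    ∀ n, sFun μ n = sFun ν n := by
  intro n; induction n using Nat.strong_induction_on with
  | _ n ih =>
    have him : sFun μ '' Set.Iio n = sFun ν '' Set.Iio n := by
      ext y; simp only [Set.mem_image, Set.mem_Iio]
      constructor
      · rintro ⟨k, hk, rfl⟩; exact ⟨k, hk, (ih k hk).symm⟩
      · rintro ⟨k, hk, rfl⟩; exact ⟨k, hk, ih k hk⟩
    by_contra hne
    rcases lt_or_gt_of_ne hne with hlt | hgt
    · have hmem : sFun ν n ∈ {y | y ∈ betaSet μ ∧ sFun μ n < y} :=
        ⟨h ▸ sFun_mem ν n, hlt⟩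
      rw [image_gt, him] at hmem
      obtain ⟨k, hk, hkeq⟩ := hmem
      exact absurd hkeq (ne_of_gt (sFun_strictAnti ν hk))
    · have hmem : sFun μ n ∈ {y | y ∈ betaSet ν ∧ sFun ν n < y} :=
        ⟨h ▸ sFun_mem μ n, hgt⟩
      rw [image_gt, ← him] at hmem
      obtain ⟨k, hk, hkeq⟩ := hmem
      exact absurd hkeq (ne_of_gt (sFun_strictAnti μ hk))

lemma eq_of_betaSet_eq {μ ν : YoungDiagram} (h : betaSet μ = betaSet ν) : μ = ν := by
  have hs := sFun_eq_of_betaSet_eq h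
  have hr : ∀ i, μ.rowLen i = ν.rowLen i := by
    intro i; have := hs i; unfold sFun at this; omega
  ext x
  cases x with
  | mk i j => rw [YoungDiagram.mem_cells, YoungDiagram.mem_cells,
      mem_iff_lt_rowLen, mem_iff_lt_rowLen, hr]

def cbound (μ : YoungDiagram) : ℕ := μ.rowLen 0 + μ.colLen 0 + 1

lemma content_bound {μ : YoungDiagram} {p : ℕ × ℕ} (hp : p ∈ μ.cells) :
    -(cbound μ : ℤ) < content p ∧ content p < cbound μ := by
  obtain ⟨x, y⟩ := p
  rw [YoungDiagram.mem_cells] at hp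
  have hy : y < μ.rowLen x := YoungDiagram.mem_iff_lt_rowLen.1 hp
  have hx : x < μ.colLen 0 :=
    YoungDiagram.mem_iff_lt_colLen.1 (μ.up_left_mem (le_refl x) (Nat.zero_le y) hp)
  have hrow : μ.rowLen x ≤ μ.rowLen 0 := μ.rowLen_anti 0 x (Nat.zero_le x)
  unfold content cbound
  simp only
  push_cast
  omega

lemma NA_eq_sum (r : ℕ) (a : ZMod r) (μ : YoungDiagram) {L M : ℤ}
    (hL : L ≤ -(cbound μ : ℤ)) (hM : (cbound μ : ℤ) ≤ M) :
    (NA r a μ : ℤ) = ∑ c ∈ Finset.Ico L M, (if ((c : ZMod r) = a) then (ndiag μ c : ℤ) else 0) := by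
  have h1 : NA r a μ = ∑ c ∈ Finset.Ico L M,
      ((μ.cells.filter (fun p => cellColor r p = a)).filter (fun p => content p = c)).card := by
    apply Finset.card_eq_sum_card_fiberwise
    intro p hp
    rw [Finset.mem_coe, Finset.mem_filter] at hp
    have := content_bound hp.1
    rw [Finset.mem_coe, Finset.mem_Ico]
    omega
  rw [h1]
  push_cast
  apply Finset.sum_congr rfl
  intro c hc
  split_ifs with h
  · rw [← ndiag_eq_card]
    have he2 : (μ.cells.filter (fun p => cellColor r p = a)).filter (fun p => content p = c)
        = μ.cells.filter (fun p => content p = c) := by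
      ext p
      simp only [Finset.mem_filter]
      constructor
      · rintro ⟨⟨hp1, _⟩, hp3⟩; exact ⟨hp1, hp3⟩
      · rintro ⟨hp1, hp2⟩
        exact ⟨⟨hp1, by rw [cellColor_eq_content, hp2, h]⟩, hp2⟩
    rw [he2]
  · have he : ((μ.cells.filter (fun p => cellColor r p = a)).filter (fun p => content p = c)) = ∅ := by
      rw [Finset.eq_empty_iff_forall_notMem]
      rintro p hp
      rw [Finset.mem_filter, Finset.mem_filter] at hp
      obtain ⟨⟨_, hp2⟩, hp3⟩ := hp
      rw [cellColor_eq_content, hp3] at hp2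
      exact h hp2
    rw [he]
    simp

lemma NA_sub (r : ℕ) (a : ZMod r) (μ : YoungDiagram) {L M : ℤ}
    (hL : L + 1 ≤ -(cbound μ : ℤ)) (hM : (cbound μ : ℤ) ≤ M) :
    (NA r a μ : ℤ) - NA r (a+1) μ
      = ∑ c ∈ Finset.Ico L M, (if ((c : ZMod r) = a)
          then ((if (0:ℤ) ≤ c then (1:ℤ) else 0) - (if (-c-1) ∈ betaSet μ then 1 else 0))
          else 0) := by
  have e1 := NA_eq_sum r a μ (L := L) (M := M) (by omega) hM
  have e2 := NA_eq_sum r (a+1) μ (L := L+1) (M := M+1) (by omega) (by omega)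
  have e3 : ∑ c ∈ Finset.Ico (L+1) (M+1), (if ((c : ZMod r) = a+1) then (ndiag μ c : ℤ) else 0)
      = ∑ c ∈ Finset.Ico L M, (if ((c : ZMod r) = a) then (ndiag μ (c+1) : ℤ) else 0) := by
    apply Finset.sum_nbij' (i := fun c => c - 1) (j := fun c => c + 1)
    · intro c hc; rw [Finset.mem_Ico] at hc ⊢; omega
    · intro c hc; rw [Finset.mem_Ico] at hc ⊢; omega
    · intro c hc; ring
    · intro c hc; ring
    · intro c hc
      have hiff : ((c : ZMod r) = a + 1) ↔ (((c - 1 : ℤ) : ZMod r) = a) := by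
        push_cast
        constructor
        · intro h; rw [h]; ring
        · intro h; rw [← h]; ring
      have harg : (c - 1) + 1 = c := by ring
      rw [harg]
      by_cases h : ((c : ZMod r) = a + 1)
      · rw [if_pos h, if_pos (hiff.1 h)]
      · rw [if_neg h, if_neg (fun hh => h (hiff.2 hh))]
  rw [e1, e2, e3, ← Finset.sum_sub_distrib]
  apply Finset.sum_congr rfl
  intro c hc
  by_cases h : ((c : ZMod r) = a)
  · rw [if_pos h, if_pos h, if_pos h]
    exact ndiag_rec μ c
  · rw [if_neg h, if_neg h, if_neg h]
    ring

lemma mem_down {r : ℕ} (hr : 1 ≤ r) {Bs : Set ℤ} (hcl : ∀ s ∈ Bs, s - (r:ℤ) ∈ Bs)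
    {t u : ℤ} (ht : t ∈ Bs) (hu : u ≤ t) (hdvd : (r:ℤ) ∣ (t - u)) : u ∈ Bs := by
  obtain ⟨d, hd⟩ := hdvd
  have hd0 : 0 ≤ d := by nlinarith
  have hc := closed_iter hcl t ht d.toNat
  have hdt : ((d.toNat : ℤ)) = d := Int.toNat_of_nonneg hd0
  have he : t - (d.toNat : ℤ) * r = u := by
    rw [hdt]
    linarith [hd, mul_comm d (r:ℤ)]
  rwa [he] at hc

lemma charge_strict {r : ℕ} (hr : 1 ≤ r) {A B : YoungDiagram}
    (hA : ∀ s ∈ betaSet A, s - (r:ℤ) ∈ betaSet A) (hB : ∀ s ∈ betaSet B, s - (r:ℤ) ∈ betaSet B)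
    {t0 : ℤ} (ht0A : t0 ∈ betaSet A) (ht0B : t0 ∉ betaSet B)
    {L M : ℤ} (hL : L ≤ -t0-1) (hM : -t0-1 < M) :
    ∑ c ∈ Finset.Ico L M, (if ((c : ZMod r) = ((-t0-1 : ℤ) : ZMod r))
        then ((if (0:ℤ) ≤ c then (1:ℤ) else 0) - (if (-c-1) ∈ betaSet A then 1 else 0)) else 0)
      < ∑ c ∈ Finset.Ico L M, (if ((c : ZMod r) = ((-t0-1 : ℤ) : ZMod r))
        then ((if (0:ℤ) ≤ c then (1:ℤ) else 0) - (if (-c-1) ∈ betaSet B then 1 else 0)) else 0) := by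
  apply Finset.sum_lt_sum
  · intro c hc
    by_cases h1 : ((c : ZMod r) = ((-t0-1 : ℤ) : ZMod r))
    · rw [if_pos h1, if_pos h1]
      have hdvd : (r:ℤ) ∣ (t0 - (-c-1)) := by
        have hz : ((t0 - (-c-1) : ℤ) : ZMod r) = 0 := by
          push_cast
          push_cast at h1
          rw [h1]
          ring
        rwa [ZMod.intCast_zmod_eq_zero_iff_dvd] at hz
      by_cases h2 : (-c-1) ∈ betaSet B
      · have h3 : (-c-1) ∈ betaSet A := by
          have hle : (-c-1) ≤ t0 := by
            by_contra hgt
            push_neg at hgt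
            refine absurd (mem_down hr hB h2 (by omega) ?_) ht0B
            rw [show (-c-1) - t0 = -(t0 - (-c-1)) from by ring]
            exact dvd_neg.2 hdvd
          exact mem_down hr hA ht0A hle hdvd
        rw [if_pos h2, if_pos h3]
      · rw [if_neg h2]
        split_ifs <;> omega
    · rw [if_neg h1, if_neg h1]
  · refine ⟨-t0-1, Finset.mem_Ico.2 ⟨hL, hM⟩, ?_⟩
    rw [if_pos rfl, if_pos rfl, show -(-t0-1)-1 = t0 from by ring, if_pos ht0A, if_neg ht0B]
    split_ifs <;> omega

lemma sFun_zero_le_cbound (μ : YoungDiagram) : sFun μ 0 ≤ (cbound μ : ℤ) := by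
  unfold sFun cbound; push_cast; omega

lemma core_rigid {r : ℕ} (hr : 1 ≤ r) {A B : YoungDiagram}
    (hcA : IsRCore r A) (hcB : IsRCore r B)
    (hNA : ∀ a : ZMod r, (NA r a A : ℤ) - NA r (a+1) A = (NA r a B : ℤ) - NA r (a+1) B) :
    A = B := by
  have hclA := rcore_closed hr hcA
  have hclB := rcore_closed hr hcB
  apply eq_of_betaSet_eq
  by_contra hne
  set L : ℤ := -(cbound A : ℤ) - (cbound B : ℤ) - 1 with hLdef
  set M : ℤ := (cbound A : ℤ) + (cbound B : ℤ) + 1 with hMdef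
  have hcbA : (1:ℤ) ≤ (cbound A : ℤ) := by unfold cbound; push_cast; omega
  have hcbB : (1:ℤ) ≤ (cbound B : ℤ) := by unfold cbound; push_cast; omega
  have hchargeEq : ∀ a : ZMod r,
      (∑ c ∈ Finset.Ico L M, (if ((c : ZMod r) = a)
          then ((if (0:ℤ) ≤ c then (1:ℤ) else 0) - (if (-c-1) ∈ betaSet A then 1 else 0)) else 0))
      = (∑ c ∈ Finset.Ico L M, (if ((c : ZMod r) = a)
          then ((if (0:ℤ) ≤ c then (1:ℤ) else 0) - (if (-c-1) ∈ betaSet B then 1 else 0)) else 0)) := by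
    intro a
    have d1 := NA_sub r a A (L := L) (M := M) (by omega) (by omega)
    have d2 := NA_sub r a B (L := L) (M := M) (by omega) (by omega)
    rw [← d1, ← d2]
    exact hNA a
  obtain ⟨t0, ht0⟩ : ∃ t0 : ℤ, (t0 ∈ betaSet A ∧ t0 ∉ betaSet B) ∨ (t0 ∈ betaSet B ∧ t0 ∉ betaSet A) := by
    by_contra hno
    apply hne
    ext t
    constructor
    · intro ht
      by_contra htB
      exact hno ⟨t, Or.inl ⟨ht, htB⟩⟩
    · intro ht
      by_contra htA
      exact hno ⟨t, Or.inr ⟨ht, htA⟩⟩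
  rcases ht0 with ⟨htA, htB⟩ | ⟨htB, htA⟩
  · have hub : t0 ≤ (cbound A : ℤ) := le_trans (betaSet_le_max htA) (sFun_zero_le_cbound A)
    have hlb : -(cbound B : ℤ) ≤ t0 := by
      by_contra hc
      push_neg at hc
      refine htB (betaSet_mem_low ?_)
      unfold cbound at hc
      push_cast at hc
      omega
    have := charge_strict hr hclA hclB htA htB (L := L) (M := M) (by omega) (by omega)
    rw [hchargeEq] at this
    exact lt_irrefl _ this
  · have hub : t0 ≤ (cbound B : ℤ) := le_trans (betaSet_le_max htB) (sFun_zero_le_cbound B)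
    have hlb : -(cbound A : ℤ) ≤ t0 := by
      by_contra hc
      push_neg at hc
      refine htA (betaSet_mem_low ?_)
      unfold cbound at hc
      push_cast at hc
      omega
    have := charge_strict hr hclB hclA htB htA (L := L) (M := M) (by omega) (by omega)
    rw [hchargeEq] at this
    exact lt_irrefl _ this


end CoreProof

/-- If `λ ⊆ μ` and the skew diagram `μ/λ` has equally many cells of each color
mod `r`, then `λ` and `μ` have the same `r`-core. -/
theorem core_eq_of_balanced_skew (r : ℕ) (hr : 2 ≤ r) (lam mu : YoungDiagram)
    (hsub : lam.cells ⊆ mu.cells)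
    (hbal : ∀ i : ZMod r,
      {c : ℕ × ℕ | c ∈ mu ∧ c ∉ lam ∧ cellColor r c = i}.ncard =
        {c : ℕ × ℕ | c ∈ mu ∧ c ∉ lam ∧ cellColor r c = 0}.ncard)
    (clam cmu : YoungDiagram)
    (h1 : ReachesCore r lam clam) (h2 : ReachesCore r mu cmu) :
    clam = cmu := by
  
  classical
  obtain ⟨hrt1, hcore1⟩ := h1
  obtain ⟨hrt2, hcore2⟩ := h2
  have hr1 : 1 ≤ r := by omega
  set Sk := mu.cells \ lam.cells with hSk
  have hsetEq : ∀ i : ZMod r, {c : ℕ × ℕ | c ∈ mu ∧ c ∉ lam ∧ cellColor r c = i}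
      = ↑(Sk.filter (fun c => cellColor r c = i)) := by
    intro i
    ext c
    simp only [Set.mem_setOf_eq, Finset.coe_filter, Finset.mem_sdiff,
      YoungDiagram.mem_cells, hSk]
    tauto
  have hbal' : ∀ i : ZMod r, (Sk.filter (fun c => cellColor r c = i)).card
      = (Sk.filter (fun c => cellColor r c = 0)).card := by
    intro i
    have hb := hbal i
    rw [hsetEq i, hsetEq 0, Set.ncard_coe_finset, Set.ncard_coe_finset] at hb
    exact hb
  have hmuNA : ∀ i : ZMod r,
      CoreProof.NA r i mu = CoreProof.NA r i lam + (Sk.filter (fun c => cellColor r c = 0)).card := by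
    intro i
    unfold CoreProof.NA
    rw [show mu.cells = lam.cells ∪ Sk from (Finset.union_sdiff_of_subset hsub).symm,
      Finset.filter_union,
      Finset.card_union_of_disjoint (Finset.disjoint_filter_filter Finset.disjoint_sdiff),
      hbal' i]
  obtain ⟨k1, hk1⟩ := CoreProof.reaches_NA hr1 hrt1
  obtain ⟨k2, hk2⟩ := CoreProof.reaches_NA hr1 hrt2
  apply CoreProof.core_rigid hr1 hcore1 hcore2
  intro a
  have h1a := hk1 a
  have h1b := hk1 (a+1)
  have h2a := hk2 a
  have h2b := hk2 (a+1)
  have hma := hmuNA a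
  have hmb := hmuNA (a+1)
  omega
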